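/- Let w : ℝ → ℝ be measurable with |w(r)| ≤ C·(|r|^{2β} ∧ 1) for some 0 < β < 1/2, and let v(x+iy) = (1/π)∫ y/((r−x)²+y²)·w(r) dr be its Poisson extension to the upper half-plane. Then there exists C₁ = C₁(C,β) such that |v(x+iy)| ≤ C₁·y^{2β} for all 0 ≤ |x| ≤ y ≤ 1/2. -/

import Mathlib

open Set Filter MeasureTheory Real

private lemma my_rpow_add_le {a b p : ℝ} (ha : 0 ≤ a) (hb : 0 ≤ b) (hp : 0 ≤ p)
    (hp1 : p ≤ 1) : (a + b) ^ p ≤ a ^ p + b ^ p := by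
  have h := NNReal.rpow_add_le_add_rpow a.toNNReal b.toNNReal hp hp1
  have h2 : (((a.toNNReal + b.toNNReal) ^ p : NNReal) : ℝ)
      ≤ ((a.toNNReal ^ p + b.toNNReal ^ p : NNReal) : ℝ) := NNReal.coe_le_coe.2 h
  push_cast at h2
  rwa [Real.coe_toNNReal a ha, Real.coe_toNNReal b hb] at h2

private lemma integrable_abs_rpow_div {p : ℝ} (hp0 : 0 < p) (hp1 : p < 1) :
    Integrable (fun t : ℝ => |t| ^ p / (1 + t ^ 2)) := by
  have hcont : Continuous (fun t : ℝ => |t| ^ p / (1 + t ^ 2)) := by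
    apply Continuous.div
    · exact continuous_abs.rpow_const (fun t => Or.inr hp0.le)
    · continuity
    · intro t; positivity
  refine Integrable.mono ((integrable_one_add_norm
      (E := ℝ) (μ := volume) (r := 2 - p) (by simp; linarith)).const_mul 2)
    hcont.aestronglyMeasurable (ae_of_all _ fun t => ?_)
  have hb : (0:ℝ) < 1 + |t| := by positivity
  have key : |t| ^ p * (1 + |t|) ^ (2 - p) ≤ 2 * (1 + t ^ 2) := by
    have h1 : |t| ^ p ≤ (1 + |t|) ^ p :=
      Real.rpow_le_rpow (abs_nonneg t) (by linarith) hp0.le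
    have h2 : |t| ^ p * (1 + |t|) ^ (2 - p) ≤ (1 + |t|) ^ p * (1 + |t|) ^ (2 - p) :=
      mul_le_mul_of_nonneg_right h1 (Real.rpow_nonneg hb.le _)
    have h3 : (1 + |t|) ^ p * (1 + |t|) ^ (2 - p) = (1 + |t|) ^ (2:ℝ) := by
      rw [← Real.rpow_add hb]; norm_num
    have h4 : (1 + |t|) ^ (2:ℝ) = 1 + 2 * |t| + t ^ 2 := by
      rw [Real.rpow_two, add_sq, one_pow, sq_abs]; ring
    refine h2.trans ?_
    rw [h3, h4]
    clear h1 h2 h3 h4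
    nlinarith [sq_nonneg (|t| - 1), sq_abs t]
  have hmain : |t| ^ p / (1 + t ^ 2) ≤ 2 / ((1 + |t|) ^ (2 - p)) := by
    rw [div_le_div_iff₀ (by positivity) (by positivity)]
    nlinarith [key]
  have hnorm1 : ‖|t| ^ p / (1 + t ^ 2)‖ = |t| ^ p / (1 + t ^ 2) := by
    rw [Real.norm_eq_abs, abs_of_nonneg]; positivity
  have hnorm2 : ‖2 * (1 + ‖t‖) ^ (-(2 - p))‖ = 2 / ((1 + |t|) ^ (2 - p)) := by
    rw [Real.norm_eq_abs, Real.norm_eq_abs, Real.rpow_neg hb.le, abs_of_nonneg (by positivity)]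
    ring
  rw [hnorm1, hnorm2]
  exact hmain

private lemma kernel_eq {y : ℝ} (hy : 0 < y) (s : ℝ) :
    y / (s ^ 2 + y ^ 2) = y⁻¹ * (1 + (s / y) ^ 2)⁻¹ := by
  have : s ^ 2 + y ^ 2 ≠ 0 := by positivity
  field_simp
  ring

private lemma integrable_kernel (x : ℝ) {y : ℝ} (hy : 0 < y) :
    Integrable (fun r : ℝ => y / ((r - x) ^ 2 + y ^ 2)) := by
  have h1 : Integrable (fun s : ℝ => (1 + (s / y) ^ 2)⁻¹) :=
    integrable_inv_one_add_sq.comp_div hy.ne'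
  have h2 := (h1.const_mul y⁻¹).comp_sub_right x
  refine h2.congr (ae_of_all _ fun r => ?_)
  exact (kernel_eq hy (r - x)).symm

private lemma integral_kernel (x : ℝ) {y : ℝ} (hy : 0 < y) :
    ∫ r : ℝ, y / ((r - x) ^ 2 + y ^ 2) = π := by
  have h1 : (∫ r : ℝ, y / ((r - x) ^ 2 + y ^ 2))
      = ∫ s : ℝ, y / (s ^ 2 + y ^ 2) :=
    integral_sub_right_eq_self (fun s => y / (s ^ 2 + y ^ 2)) x
  rw [h1]
  simp_rw [kernel_eq hy]
  rw [MeasureTheory.integral_const_mul, Measure.integral_comp_div (fun t : ℝ => (1 + t ^ 2)⁻¹) y,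
    integral_univ_inv_one_add_sq, abs_of_pos hy, smul_eq_mul]
  field_simp

private lemma kernel_rpow_eq {p y : ℝ} (hy : 0 < y) (s : ℝ) :
    y * |s| ^ p / (s ^ 2 + y ^ 2) = y ^ (p - 1) * (|s / y| ^ p / (1 + (s / y) ^ 2)) := by
  have h0 : s ^ 2 + y ^ 2 ≠ 0 := by positivity
  have h1 : |s / y| = |s| / y := by rw [abs_div, abs_of_pos hy]
  have h2 : (|s| / y) ^ p = |s| ^ p / y ^ p := Real.div_rpow (abs_nonneg s) hy.le p
  have h3 : (1 + (s / y) ^ 2) = (y ^ 2 + s ^ 2) / y ^ 2 := by field_simp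
  have hyp : y ^ p ≠ 0 := (Real.rpow_pos_of_pos hy p).ne'
  rw [h1, h2, h3, Real.rpow_sub_one hy.ne']
  field_simp
  ring

private lemma integrable_kernel_rpow (x : ℝ) {p y : ℝ} (hy : 0 < y)
    (hp0 : 0 < p) (hp1 : p < 1) :
    Integrable (fun r : ℝ => y * |r - x| ^ p / ((r - x) ^ 2 + y ^ 2)) := by
  have h1 : Integrable (fun s : ℝ => |s / y| ^ p / (1 + (s / y) ^ 2)) :=
    (integrable_abs_rpow_div hp0 hp1).comp_div hy.ne'
  have h2 := (h1.const_mul (y ^ (p - 1))).comp_sub_right x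
  refine h2.congr (ae_of_all _ fun r => ?_)
  exact (kernel_rpow_eq hy (r - x)).symm

private lemma integral_kernel_rpow (x : ℝ) {p y : ℝ} (hy : 0 < y) :
    ∫ r : ℝ, y * |r - x| ^ p / ((r - x) ^ 2 + y ^ 2)
      = y ^ p * ∫ t : ℝ, |t| ^ p / (1 + t ^ 2) := by
  have h1 : (∫ r : ℝ, y * |r - x| ^ p / ((r - x) ^ 2 + y ^ 2))
      = ∫ s : ℝ, y * |s| ^ p / (s ^ 2 + y ^ 2) :=
    integral_sub_right_eq_self (fun s => y * |s| ^ p / (s ^ 2 + y ^ 2)) x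
  rw [h1]
  simp_rw [kernel_rpow_eq hy]
  rw [MeasureTheory.integral_const_mul,
    Measure.integral_comp_div (fun t : ℝ => |t| ^ p / (1 + t ^ 2)) y,
    abs_of_pos hy, smul_eq_mul, ← mul_assoc, ← Real.rpow_add_one hy.ne']
  ring_nf

theorem poisson_extension_bound (C β : ℝ) (hC : 0 < C) (hβ0 : 0 < β)
    (hβ : β < 1/2) (w : ℝ → ℝ) (hw : Measurable w)
    (hbound : ∀ r : ℝ, |w r| ≤ C * min (|r| ^ (2 * β)) 1) :
    ∃ C₁ : ℝ, 0 < C₁ ∧ ∀ x y : ℝ, |x| ≤ y → y ≤ 1/2 → 0 < y →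
      |(1 / π) * ∫ r : ℝ, y / ((r - x) ^ 2 + y ^ 2) * w r| ≤ C₁ * y ^ (2 * β) := by
  set p := 2 * β with hpdef
  have hp0 : 0 < p := by positivity
  have hp1 : p < 1 := by rw [hpdef]; linarith
  set Ip := ∫ t : ℝ, |t| ^ p / (1 + t ^ 2) with hIpdef
  have hIp0 : 0 ≤ Ip := integral_nonneg (fun t => by positivity)
  refine ⟨C * (Ip + π) / π, by positivity, fun x y hxy hy2 hy0 => ?_⟩
  have hker_nonneg : ∀ r : ℝ, 0 ≤ y / ((r - x) ^ 2 + y ^ 2) := fun r => by positivity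
  -- pointwise bound
  have hpt : ∀ r : ℝ, ‖y / ((r - x) ^ 2 + y ^ 2) * w r‖
      ≤ C * (y * |r - x| ^ p / ((r - x) ^ 2 + y ^ 2))
        + C * y ^ p * (y / ((r - x) ^ 2 + y ^ 2)) := by
    intro r
    have hK : 0 ≤ y / ((r - x) ^ 2 + y ^ 2) := hker_nonneg r
    have h1 : ‖y / ((r - x) ^ 2 + y ^ 2) * w r‖
        = y / ((r - x) ^ 2 + y ^ 2) * |w r| := by
      rw [Real.norm_eq_abs, abs_mul, abs_of_nonneg hK]
    have h2 : |w r| ≤ C * |r| ^ p :=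
      (hbound r).trans (by
        have := min_le_left (|r| ^ p) 1
        nlinarith)
    have h3 : |r| ^ p ≤ |r - x| ^ p + y ^ p := by
      have ha : |r| ≤ |r - x| + |x| := by
        calc |r| = |(r - x) + x| := by ring_nf
        _ ≤ |r - x| + |x| := abs_add_le _ _
      calc |r| ^ p ≤ (|r - x| + |x|) ^ p :=
            Real.rpow_le_rpow (abs_nonneg r) ha hp0.le
      _ ≤ |r - x| ^ p + |x| ^ p :=
            my_rpow_add_le (abs_nonneg _) (abs_nonneg _) hp0.le hp1.le
      _ ≤ |r - x| ^ p + y ^ p :=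
            add_le_add_right (Real.rpow_le_rpow (abs_nonneg x) hxy hp0.le) _
    rw [h1]
    calc y / ((r - x) ^ 2 + y ^ 2) * |w r|
        ≤ y / ((r - x) ^ 2 + y ^ 2) * (C * (|r - x| ^ p + y ^ p)) := by
          refine mul_le_mul_of_nonneg_left ?_ hK
          calc |w r| ≤ C * |r| ^ p := h2
          _ ≤ C * (|r - x| ^ p + y ^ p) := by
            exact mul_le_mul_of_nonneg_left h3 hC.le
    _ = C * (y * |r - x| ^ p / ((r - x) ^ 2 + y ^ 2))
          + C * y ^ p * (y / ((r - x) ^ 2 + y ^ 2)) := by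
          field_simp
          try ring
  -- integral bounds
  have hint1 := integrable_kernel_rpow x hy0 hp0 hp1
  have hint2 := integrable_kernel x hy0
  have hupper : Integrable (fun r : ℝ =>
      C * (y * |r - x| ^ p / ((r - x) ^ 2 + y ^ 2))
        + C * y ^ p * (y / ((r - x) ^ 2 + y ^ 2))) :=
    (hint1.const_mul C).add (hint2.const_mul (C * y ^ p))
  have hnormint : |∫ r : ℝ, y / ((r - x) ^ 2 + y ^ 2) * w r|
      ≤ ∫ r : ℝ, ‖y / ((r - x) ^ 2 + y ^ 2) * w r‖ := by
    rw [← Real.norm_eq_abs]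
    exact norm_integral_le_integral_norm _
  have hmono : (∫ r : ℝ, ‖y / ((r - x) ^ 2 + y ^ 2) * w r‖)
      ≤ ∫ r : ℝ, (C * (y * |r - x| ^ p / ((r - x) ^ 2 + y ^ 2))
        + C * y ^ p * (y / ((r - x) ^ 2 + y ^ 2))) :=
    integral_mono_of_nonneg (ae_of_all _ fun r => norm_nonneg _) hupper
      (ae_of_all _ hpt)
  have hval : (∫ r : ℝ, (C * (y * |r - x| ^ p / ((r - x) ^ 2 + y ^ 2))
        + C * y ^ p * (y / ((r - x) ^ 2 + y ^ 2))))
      = C * (Ip + π) * y ^ p := by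
    rw [integral_add (hint1.const_mul C) (hint2.const_mul (C * y ^ p)),
      MeasureTheory.integral_const_mul, MeasureTheory.integral_const_mul,
      integral_kernel_rpow x hy0, integral_kernel x hy0]
    ring
  have hπ : (0:ℝ) < π := Real.pi_pos
  rw [abs_mul, abs_of_nonneg (by positivity : (0:ℝ) ≤ 1 / π)]
  calc (1 / π) * |∫ r : ℝ, y / ((r - x) ^ 2 + y ^ 2) * w r|
      ≤ (1 / π) * (C * (Ip + π) * y ^ p) := by
        refine mul_le_mul_of_nonneg_left ?_ (by positivity)
        exact hnormint.trans (hmono.trans_eq hval)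
  _ = C * (Ip + π) / π * y ^ p := by ring
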